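/- Let M be a matroid with independent sets ℱ and rank function r on a finite ground set 𝒳, and let ≻ be a strict linear order on 𝒳. There exists exactly one choice rule C on 𝒳 satisfying all of: (i) feasibility: C(A) ∈ ℱ for every A ⊆ 𝒳; (ii) rank maximality: r(C(A)) = r(A) for every A ⊆ 𝒳; (iii) no justified envy under rank: for every A ⊆ 𝒳, x ∈ C(A), and y ∈ A \ C(A), if y ≻ x then r((C(A) \ {x}) ∪ {y}) < r(C(A)). -/

import Mathlib

/-- A matroid on the finite ground set `α`, given by its independent sets. -/
structure FinMatroid (α : Type*) [DecidableEq α] where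
  Indep : Finset α → Prop
  indep_empty : Indep ∅
  indep_subset : ∀ ⦃A B : Finset α⦄, Indep B → A ⊆ B → Indep A
  indep_exchange : ∀ ⦃A B : Finset α⦄, Indep A → Indep B → A.card < B.card →
    ∃ x ∈ B, x ∉ A ∧ Indep (insert x A)

open Classical in
/-- The rank of a set: the common cardinality of its maximal independent
subsets. -/
noncomputable def FinMatroid.rank {α : Type*} [DecidableEq α]
    (M : FinMatroid α) (X : Finset α) : ℕ :=
  (X.powerset.filter fun A => M.Indep A).sup Finset.card

/-- `Y` is a basis of `X`: a maximal independent subset of `X`. -/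
def FinMatroid.IsBasisOf {α : Type*} [DecidableEq α]
    (M : FinMatroid α) (Y X : Finset α) : Prop :=
  Y ⊆ X ∧ M.Indep Y ∧ ∀ Z : Finset α, Z ⊆ X → M.Indep Z → Y ⊆ Z → Z = Y


set_option linter.unusedSectionVars false

open scoped Classical

namespace FinMatroidAux
variable {α : Type*} [DecidableEq α] (M : FinMatroid α)

lemma rank_le_card (X : Finset α) : M.rank X ≤ X.card := by
  apply Finset.sup_le
  intro A hA
  simp only [Finset.mem_filter, Finset.mem_powerset] at hA
  exact Finset.card_le_card hA.1

lemma card_le_rank {Y X : Finset α} (hYX : Y ⊆ X) (hY : M.Indep Y) : Y.card ≤ M.rank X := by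
  apply Finset.le_sup (f := Finset.card)
  simp only [Finset.mem_filter, Finset.mem_powerset]
  exact ⟨hYX, hY⟩

lemma rank_indep {X : Finset α} (hX : M.Indep X) : M.rank X = X.card :=
  le_antisymm (rank_le_card M X) (card_le_rank M (Finset.Subset.refl X) hX)

lemma exists_basis_card (X : Finset α) : ∃ Y, Y ⊆ X ∧ M.Indep Y ∧ Y.card = M.rank X := by
  obtain ⟨Y, hY, h⟩ := Finset.exists_mem_eq_sup (X.powerset.filter fun A => M.Indep A)
    ⟨∅, by simp [M.indep_empty]⟩ Finset.card
  simp only [Finset.mem_filter, Finset.mem_powerset] at hY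
  exact ⟨Y, hY.1, hY.2, h.symm⟩

lemma indep_of_rank_eq_card {X : Finset α} (h : M.rank X = X.card) : M.Indep X := by
  obtain ⟨Y, hYX, hY, hcard⟩ := exists_basis_card M X
  have : Y = X := Finset.eq_of_subset_of_card_le hYX (by omega)
  rwa [this] at hY

lemma augment {I D : Finset α} (hI : M.Indep I) (hD : M.Indep D) :
    ∀ n, D.card - I.card ≤ n → ∃ J, M.Indep J ∧ I ⊆ J ∧ J ⊆ I ∪ D ∧ D.card ≤ J.card := by
  intro n
  induction n generalizing I with
  | zero =>
    intro h
    exact ⟨I, hI, Finset.Subset.refl I, Finset.subset_union_left, by omega⟩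
  | succ n ih =>
    intro h
    by_cases hc : D.card ≤ I.card
    · exact ⟨I, hI, Finset.Subset.refl I, Finset.subset_union_left, hc⟩
    · obtain ⟨x, hxD, hxI, hind⟩ := M.indep_exchange hI hD (lt_of_not_ge hc)
      obtain ⟨J, hJ, hIJ, hJU, hcard⟩ := ih hind
        (by rw [Finset.card_insert_of_notMem hxI]; omega)
      refine ⟨J, hJ, (Finset.subset_insert x I).trans hIJ, hJU.trans ?_, hcard⟩
      intro z hz
      simp only [Finset.mem_union, Finset.mem_insert] at hz ⊢
      rcases hz with (h | h) | h
      · exact Or.inr (h ▸ hxD)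
      · exact Or.inl h
      · exact Or.inr h

variable [LinearOrder α]

noncomputable def greedyList : List α → Finset α
  | [] => ∅
  | a :: l =>
    if M.Indep (insert a (greedyList l)) then insert a (greedyList l) else greedyList l

lemma greedyList_subset (l : List α) : greedyList M l ⊆ l.toFinset := by
  induction l with
  | nil => simp [greedyList]
  | cons a l ih =>
    simp only [greedyList]
    split
    · intro z hz
      rcases Finset.mem_insert.1 hz with h | h
      · simp [h]
      · simp only [List.toFinset_cons, Finset.mem_insert]; exact Or.inr (ih h)
    · intro z hz
      simp only [List.toFinset_cons, Finset.mem_insert]; exact Or.inr (ih hz)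

lemma greedyList_indep (l : List α) : M.Indep (greedyList M l) := by
  induction l with
  | nil => simpa [greedyList] using M.indep_empty
  | cons a l ih =>
    simp only [greedyList]
    split
    · assumption
    · exact ih

lemma greedyList_filter (y : α) (l : List α) (hl : l.Pairwise (· < ·)) :
    (greedyList M l).filter (y < ·) = greedyList M (l.filter (y < ·)) := by
  induction l with
  | nil => simp [greedyList]
  | cons a l ih =>
    have hl' : l.Pairwise (· < ·) := hl.of_cons
    have hal : ∀ b ∈ l, a < b := fun b hb => List.rel_of_pairwise_cons hl hb
    by_cases hya : y < a
    · have hfl : l.filter (fun b => decide (y < b)) = l :=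
        List.filter_eq_self.2 (fun b hb => by simp [lt_trans hya (hal b hb)])
      have h1 : (a :: l).filter (fun b => decide (y < b)) = a :: l := by
        simp [List.filter_cons, hya, hfl]
      rw [show (List.filter (fun b => decide (y < b)) (a :: l)) = a :: l from h1]
      apply Finset.filter_eq_self.2
      intro z hz
      have := greedyList_subset M (a :: l) hz
      simp only [List.toFinset_cons, Finset.mem_insert, List.mem_toFinset] at this
      rcases this with h | h
      · exact h ▸ hya
      · exact lt_trans hya (hal z h)
    · have h1 : (a :: l).filter (fun b => decide (y < b)) = l.filter (fun b => decide (y < b)) := by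
        simp [List.filter_cons, hya]
      rw [h1, ← ih hl']
      simp only [greedyList]
      split
      · rw [Finset.filter_insert]
        simp [hya]
      · rfl

lemma greedyList_mem_iff {y : α} {l : List α} (hl : l.Pairwise (· < ·)) (hy : y ∈ l) :
    y ∈ greedyList M l ↔ M.Indep (insert y ((greedyList M l).filter (y < ·))) := by
  induction l with
  | nil => simp at hy
  | cons a l ih =>
    have hl' : l.Pairwise (· < ·) := hl.of_cons
    have hal : ∀ b ∈ l, a < b := fun b hb => List.rel_of_pairwise_cons hl hb
    have hBl := greedyList_subset M l
    rcases List.mem_cons.1 hy with rfl | hyl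
    · -- y = a
      have haB : y ∉ greedyList M l := fun h => lt_irrefl y (hal y (List.mem_toFinset.1 (hBl h)))
      have hfB : (greedyList M l).filter (y < ·) = greedyList M l :=
        Finset.filter_eq_self.2 (fun z hz => hal z (List.mem_toFinset.1 (hBl hz)))
      simp only [greedyList]
      by_cases hcond : M.Indep (insert y (greedyList M l))
      · simp only [if_pos hcond]
        rw [Finset.filter_insert]
        simp only [lt_irrefl, if_neg (lt_irrefl y), hfB]
        simp [hcond]
      · simp only [if_neg hcond]
        rw [hfB]
        simp [haB, hcond]
    · -- y ∈ l
      have hay : a < y := hal y hyl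
      have key : (greedyList M (a :: l)).filter (y < ·) = (greedyList M l).filter (y < ·) := by
        simp only [greedyList]
        split
        · rw [Finset.filter_insert, if_neg (not_lt.2 hay.le)]
        · rfl
      have hmem : y ∈ greedyList M (a :: l) ↔ y ∈ greedyList M l := by
        simp only [greedyList]
        split
        · rw [Finset.mem_insert]
          constructor
          · rintro (h | h)
            · exact absurd h hay.ne'
            · exact h
          · exact Or.inr
        · exact Iff.rfl
      rw [key, hmem]
      exact ih hl' hyl

noncomputable def greedy (A : Finset α) : Finset α := greedyList M (A.sort (· ≤ ·))

lemma greedy_subset (A : Finset α) : greedy M A ⊆ A := by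
  intro z hz
  have := greedyList_subset M (A.sort (· ≤ ·)) hz
  rwa [Finset.sort_toFinset] at this

lemma greedy_indep (A : Finset α) : M.Indep (greedy M A) := greedyList_indep M _

lemma greedy_mem_iff {y : α} {A : Finset α} (hy : y ∈ A) :
    y ∈ greedy M A ↔ M.Indep (insert y ((greedy M A).filter (y < ·))) :=
  greedyList_mem_iff M (Finset.sortedLT_sort A).pairwise ((Finset.mem_sort _).2 hy)

lemma greedy_max {y : α} {A : Finset α} (hy : y ∈ A) (hyB : y ∉ greedy M A) :
    ¬ M.Indep (insert y (greedy M A)) := by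
  intro h
  apply hyB
  rw [greedy_mem_iff M hy]
  exact M.indep_subset h (Finset.insert_subset_insert y (Finset.filter_subset _ _))

lemma rank_eq_greedy_card (A : Finset α) : M.rank A = (greedy M A).card := by
  refine le_antisymm ?_ (card_le_rank M (greedy_subset M A) (greedy_indep M A))
  apply Finset.sup_le
  intro Y hY
  simp only [Finset.mem_filter, Finset.mem_powerset] at hY
  by_contra hc
  obtain ⟨x, hxY, hxB, hind⟩ :=
    M.indep_exchange (greedy_indep M A) hY.2 (lt_of_not_ge hc)
  exact greedy_max M (hY.1 hxY) hxB hind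

end FinMatroidAux

/-- There is exactly one choice rule satisfying feasibility, rank maximality,
and no justified envy under rank (the greedy choice rule). -/
theorem greedy_characterization
    {α : Type*} [Fintype α] [LinearOrder α] (M : FinMatroid α) :
    ∃! C : Finset α → Finset α,
      (∀ A : Finset α, C A ⊆ A) ∧
      -- (i) feasibility
      (∀ A : Finset α, M.Indep (C A)) ∧
      -- (ii) rank maximality
      (∀ A : Finset α, M.rank (C A) = M.rank A) ∧
      -- (iii) no justified envy under rank
      (∀ A : Finset α, ∀ x ∈ C A, ∀ y ∈ A \ C A,
        y > x → M.rank (insert y ((C A).erase x)) < M.rank (C A)) := by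
  classical
  refine ⟨FinMatroidAux.greedy M, ⟨fun A => FinMatroidAux.greedy_subset M A,
    fun A => FinMatroidAux.greedy_indep M A, ?_, ?_⟩, ?_⟩
  · intro A
    rw [FinMatroidAux.rank_indep M (FinMatroidAux.greedy_indep M A),
      FinMatroidAux.rank_eq_greedy_card M A]
  · intro A x hx y hy hyx
    rw [Finset.mem_sdiff] at hy
    set B := FinMatroidAux.greedy M A with hB
    set S := insert y (B.erase x) with hS
    have hSdep : ¬ M.Indep S := by
      intro h
      have hsub : insert y (B.filter (y < ·)) ⊆ S := by
        apply Finset.insert_subset_insert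
        intro z hz
        rw [Finset.mem_filter] at hz
        refine Finset.mem_erase.2 ⟨fun he => ?_, hz.1⟩
        rw [he] at hz
        exact lt_asymm hz.2 hyx
      have hI : M.Indep (insert y (B.filter (y < ·))) := M.indep_subset h hsub
      exact hy.2 ((FinMatroidAux.greedy_mem_iff M hy.1).2 hI)
    have hcard : S.card = B.card := by
      rw [hS, Finset.card_insert_of_notMem (fun h => hy.2 (Finset.mem_of_mem_erase h)),
        Finset.card_erase_of_mem hx]
      have : 0 < B.card := Finset.card_pos.2 ⟨x, hx⟩
      omega
    have h1 : M.rank S ≤ S.card := FinMatroidAux.rank_le_card M S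
    have h2 : M.rank S ≠ S.card := fun h => hSdep (FinMatroidAux.indep_of_rank_eq_card M h)
    have h3 : M.rank B = B.card := FinMatroidAux.rank_indep M (FinMatroidAux.greedy_indep M A)
    omega
  · rintro C ⟨hsub, hind, hrank, henvy⟩
    funext A
    set B := FinMatroidAux.greedy M A with hBdef
    set D := C A with hDdef
    have hDA : D ⊆ A := hsub A
    have hDind : M.Indep D := hind A
    have hDcard : D.card = M.rank A := by
      rw [← hrank A, FinMatroidAux.rank_indep M hDind]
    by_contra hne
    set s := (D \ B) ∪ (B \ D) with hs
    have hsne : s.Nonempty := by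
      rw [Finset.nonempty_iff_ne_empty]
      intro h
      rw [hs, Finset.union_eq_empty, Finset.sdiff_eq_empty_iff_subset,
        Finset.sdiff_eq_empty_iff_subset] at h
      exact hne (Finset.Subset.antisymm h.1 h.2)
    set y := s.max' hsne with hy
    have hymem : y ∈ s := s.max'_mem hsne
    have hagree : ∀ z, y < z → (z ∈ B ↔ z ∈ D) := by
      intro z hz
      by_contra hc
      have hzs : z ∈ s := by
        simp only [hs, Finset.mem_union, Finset.mem_sdiff]
        tauto
      exact absurd (s.le_max' z hzs) (not_le.2 hz)
    have hfilter : B.filter (y < ·) = D.filter (y < ·) := by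
      ext z
      simp only [Finset.mem_filter]
      constructor
      · rintro ⟨h1, h2⟩; exact ⟨(hagree z h2).1 h1, h2⟩
      · rintro ⟨h1, h2⟩; exact ⟨(hagree z h2).2 h1, h2⟩
    rw [hs, Finset.mem_union, Finset.mem_sdiff, Finset.mem_sdiff] at hymem
    rcases hymem with ⟨hyD, hyB⟩ | ⟨hyB, hyD⟩
    · have hyA : y ∈ A := hDA hyD
      have hI : M.Indep (insert y (B.filter (y < ·))) := by
        rw [hfilter]
        exact M.indep_subset hDind
          (Finset.insert_subset hyD (Finset.filter_subset _ _))
      exact hyB ((FinMatroidAux.greedy_mem_iff M hyA).2 hI)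
    · have hyA : y ∈ A := FinMatroidAux.greedy_subset M A hyB
      have hI : M.Indep (insert y (D.filter (y < ·))) := by
        rw [← hfilter]
        exact (FinMatroidAux.greedy_mem_iff M hyA).1 hyB
      set I := insert y (D.filter (y < ·)) with hIdef
      have hIA : I ⊆ A := Finset.insert_subset hyA ((Finset.filter_subset _ _).trans hDA)
      obtain ⟨J, hJ, hIJ, hJU, hJcard⟩ :=
        FinMatroidAux.augment M hI hDind (D.card - I.card) le_rfl
      have hJA : J ⊆ A := hJU.trans (Finset.union_subset hIA hDA)
      have hJle : J.card ≤ D.card := hDcard ▸ FinMatroidAux.card_le_rank M hJA hJ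
      have hJDcard : J.card = D.card := le_antisymm hJle hJcard
      have hyJ : y ∈ J := hIJ (Finset.mem_insert_self y _)
      have hJsub : J ⊆ insert y D := hJU.trans (by
        apply Finset.union_subset _ (Finset.subset_insert y D)
        exact Finset.insert_subset_insert y (Finset.filter_subset _ _))
      obtain ⟨x, hxD, hxJ⟩ : ∃ x ∈ D, x ∉ J := by
        by_contra hc
        push_neg at hc
        have hDJ : D = J := Finset.eq_of_subset_of_card_le hc (le_of_eq hJDcard)
        exact hyD (hDJ ▸ hyJ)
      have hxy : x < y := by
        have hne' : x ≠ y := fun h => hyD (h ▸ hxD)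
        have hnyx : ¬ y < x := fun h =>
          hxJ (hIJ (Finset.mem_insert_of_mem (Finset.mem_filter.2 ⟨hxD, h⟩)))
        exact lt_of_le_of_ne (not_lt.1 hnyx) hne'
      have hJeq : J = insert y (D.erase x) := by
        have h1 : J ⊆ insert y (D.erase x) := by
          intro z hz
          rcases Finset.mem_insert.1 (hJsub hz) with h | h
          · exact Finset.mem_insert.2 (Or.inl h)
          · exact Finset.mem_insert.2 (Or.inr (Finset.mem_erase.2 ⟨fun he => hxJ (he ▸ hz), h⟩))
        have h2 : (insert y (D.erase x)).card ≤ J.card := by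
          rw [Finset.card_insert_of_notMem (fun h => hyD (Finset.mem_of_mem_erase h)),
            Finset.card_erase_of_mem hxD, hJDcard]
          have : 0 < D.card := Finset.card_pos.2 ⟨x, hxD⟩
          omega
        exact Finset.eq_of_subset_of_card_le h1 h2
      have henvy' := henvy A x hxD y (Finset.mem_sdiff.2 ⟨hyA, hyD⟩) hxy
      rw [← hDdef, ← hJeq, FinMatroidAux.rank_indep M hJ, hJDcard,
        FinMatroidAux.rank_indep M hDind] at henvy'
      exact lt_irrefl _ henvy'
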